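/- arXiv:1910.03996 — 3 statements merged into one kernel-verified Lean document; each statement's English description precedes it below -/
import Mathlib

section
/- For every configuration η ∈ Ω_n and every site x ∈ T_n, the function F_x : Ω_n → ℝ defined by F_x(η) = V_b(η_x) satisfies the continuity equation (𝓛 F_x)(η) = j̄ᵉ_{x-1,x}(η) − j̄ᵉ_{x,x+1}(η), where the microscopic energy current is j̄ᵉ_{x,x+1}(η) = −α_n b² e^{−b(η_x + η_{x+1})} + α_n b² (e^{−b η_x} + e^{−b η_{x+1}}) − γ (V_b(η_{x+1}) − V_b(η_x)). -/
open Real MeasureTheory Finset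

noncomputable section

/-- The exponential potential `V_b(u) = e^{-bu} - 1 + bu`. -/
def Vb (b u : ℝ) : ℝ := Real.exp (-(b * u)) - 1 + b * u

/-- Its derivative `V_b'(u) = b (1 - e^{-bu})`. -/
def Vb' (b u : ℝ) : ℝ := b * (1 - Real.exp (-(b * u)))

/-- The configuration obtained from `η` by exchanging the coordinates `η x` and `η (x+1)`. -/
def swapConf (n : ℕ) (η : ZMod n → ℝ) (x : ZMod n) : ZMod n → ℝ :=
  fun z => if z = x then η (x + 1) else if z = x + 1 then η x else η z

/-- The exchange (noise) operator `𝓢`. -/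
def opS (n : ℕ) [NeZero n] (f : (ZMod n → ℝ) → ℝ) (η : ZMod n → ℝ) : ℝ :=
  ∑ x : ZMod n, (f (swapConf n η x) - f η)

/-- The partial derivative `∂_{η_x} f (η)`. -/
def pder (n : ℕ) (f : (ZMod n → ℝ) → ℝ) (η : ZMod n → ℝ) (x : ZMod n) : ℝ :=
  deriv (fun t => f (Function.update η x t)) (η x)

/-- The Liouville (Hamiltonian) operator `𝓐`. -/
def opA (n : ℕ) [NeZero n] (b : ℝ) (f : (ZMod n → ℝ) → ℝ) (η : ZMod n → ℝ) : ℝ :=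
  ∑ x : ZMod n, (Vb' b (η (x + 1)) - Vb' b (η (x - 1))) * pder n f η x

/-- The full generator `𝓛 = α_n 𝓐 + γ 𝓢`. -/
def gen (n : ℕ) [NeZero n] (b αn γ : ℝ) (f : (ZMod n → ℝ) → ℝ) (η : ZMod n → ℝ) : ℝ :=
  αn * opA n b f η + γ * opS n f η

/-- The microscopic energy current `j̄ᵉ_{x,x+1}`. -/
def je (n : ℕ) (b αn γ : ℝ) (η : ZMod n → ℝ) (x : ZMod n) : ℝ :=
  -αn * b ^ 2 * Real.exp (-(b * (η x + η (x + 1))))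
    + αn * b ^ 2 * (Real.exp (-(b * η x)) + Real.exp (-(b * η (x + 1))))
    - γ * (Vb b (η (x + 1)) - Vb b (η x))

lemma vb_deriv (b : ℝ) (t : ℝ) : HasDerivAt (fun u => Vb b u) (Vb' b t) t := by
  have h1 : HasDerivAt (fun u : ℝ => b * u) b t := by simpa using (hasDerivAt_id t).const_mul b
  have h2 : HasDerivAt (fun u : ℝ => Real.exp (-(b * u))) (Real.exp (-(b * t)) * (-b)) t :=
    (h1.neg).exp
  have : HasDerivAt (fun u => Vb b u) (Real.exp (-(b * t)) * (-b) + b) t := ((h2.sub_const 1).add h1)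
  convert this using 1
  simp [Vb', Vb]
  ring

lemma pder_F (n : ℕ) (b : ℝ) (η : ZMod n → ℝ) (x y : ZMod n) :
    pder n (fun η => Vb b (η x)) η y = if y = x then Vb' b (η x) else 0 := by
  unfold pder
  split_ifs with h
  · subst h
    have : (fun t => Vb b (Function.update η y t y)) = fun t => Vb b t := by
      funext t; rw [Function.update_self]
    rw [this, (vb_deriv b (η y)).deriv]
  · have : (fun t => Vb b (Function.update η y t x)) = fun _ => Vb b (η x) := by
      funext t; rw [Function.update_of_ne (Ne.symm h)]
    rw [this, deriv_const]

/-- the energy continuity equation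
`(𝓛 F_x)(η) = j̄ᵉ_{x-1,x}(η) − j̄ᵉ_{x,x+1}(η)` with `F_x(η) = V_b(η_x)`. -/
theorem energy_continuity_equation
    (n : ℕ) [NeZero n] (hn : 3 ≤ n) (b αn γ : ℝ) (hb : 0 < b) (hγ : 0 < γ)
    (η : ZMod n → ℝ) (x : ZMod n) :
    gen n b αn γ (fun η => Vb b (η x)) η
      = je n b αn γ η (x - 1) - je n b αn γ η x := by
  haveI : Fact (1 < n) := ⟨by omega⟩
  have h1 : (1 : ZMod n) ≠ 0 := one_ne_zero
  have h2 : (2 : ZMod n) ≠ 0 := by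
    intro h
    have : ((2 : ℕ) : ZMod n) = 0 := by push_cast; exact h
    have hd := (ZMod.natCast_eq_zero_iff 2 n).mp this
    have := Nat.le_of_dvd (by norm_num) hd
    omega
  have hx1 : x ≠ x + 1 := by
    intro h; apply h1; have := sub_eq_zero.mpr h; simpa using this.symm
  have hxm1 : x - 1 ≠ x := by
    intro h; apply h1; have := sub_eq_zero.mpr h; linear_combination -this
  have hx2 : x + 1 ≠ x - 1 := by
    intro h; apply h2
    have := sub_eq_zero.mpr h
    have h2' : (2 : ZMod n) = (x+1) - (x-1) := by ring
    rw [h2', this]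
  -- opA
  have hA : opA n b (fun η => Vb b (η x)) η
      = (Vb' b (η (x + 1)) - Vb' b (η (x - 1))) * Vb' b (η x) := by
    unfold opA
    rw [Finset.sum_eq_single x]
    · rw [pder_F]; simp
    · intro y _ hy; rw [pder_F]; simp [hy]
    · intro h; exact absurd (Finset.mem_univ x) h
  -- opS
  have hS : opS n (fun η => Vb b (η x)) η
      = (Vb b (η (x + 1)) - Vb b (η x)) + (Vb b (η (x - 1)) - Vb b (η x)) := by
    unfold opS
    have hterm : ∀ y : ZMod n,
        (Vb b (swapConf n η y x) - Vb b (η x))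
          = (if y = x then Vb b (η (x + 1)) - Vb b (η x) else 0)
            + (if y = x - 1 then Vb b (η (x - 1)) - Vb b (η x) else 0) := by
      intro y
      by_cases hyx : y = x
      · subst hyx
        simp [swapConf, hxm1.symm]
      · by_cases hyx1 : y = x - 1
        · subst hyx1
          have hxy : x ≠ x - 1 := fun h => hxm1 h.symm
          have hxy1 : x = (x - 1) + 1 := by ring
          simp only [swapConf, if_neg hxy, ← hxy1, if_pos rfl]
          simp [hyx]
        · have hxy : x ≠ y := fun h => hyx h.symm
          have hxy1 : x ≠ y + 1 := by
            intro h; apply hyx1; rw [h]; ring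
          simp [swapConf, hxy, hxy1, hyx, hyx1]
    calc ∑ y : ZMod n, (Vb b (swapConf n η y x) - Vb b (η x))
        = ∑ y : ZMod n, ((if y = x then Vb b (η (x + 1)) - Vb b (η x) else 0)
            + (if y = x - 1 then Vb b (η (x - 1)) - Vb b (η x) else 0)) := by
          exact Finset.sum_congr rfl (fun y _ => hterm y)
      _ = _ := by rw [Finset.sum_add_distrib]; simp
  show αn * opA n b (fun η => Vb b (η x)) η + γ * opS n (fun η => Vb b (η x)) η = _
  rw [hA, hS]
  unfold je Vb Vb'
  have e1 : -(b * (η (x-1) + η x)) = -(b * η (x-1)) + -(b * η x) := by ring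
  have e2 : -(b * (η x + η (x+1))) = -(b * η x) + -(b * η (x+1)) := by ring
  have e3 : (x - 1) + 1 = x := by ring
  rw [e3, e1, e2, Real.exp_add, Real.exp_add]
  ring

end
end

section
/- Under the equilibrium product measure, the mean energy current is ∫_{Ω_n} j̄ᵉ_{x,x+1} dμ_{β̄,λ̄} = −α_n b² (e − b v)² + α_n b² for every x ∈ T_n, where e = ∫_{Ω_n} V_b(η_x) dμ_{β̄,λ̄} and v = ∫_{Ω_n} η_x dμ_{β̄,λ̄}; in particular all the integrals appearing in this identity are finite. -/
open Real MeasureTheory Finset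

noncomputable section

/-- Unnormalized single-site Gibbs density `u ↦ exp(−β̄ e^{−bu} − λ̄ u)`. -/
def gibbsDensity (b βv lv : ℝ) (u : ℝ) : ℝ :=
  Real.exp (-(βv * Real.exp (-(b * u))) - lv * u)

/-- The single-site partition function `Z̄(β̄,λ̄)`. -/
def Zbar (b βv lv : ℝ) : ℝ := ∫ u : ℝ, gibbsDensity b βv lv u

/-- The single-site Gibbs probability measure `Z̄⁻¹ exp(−β̄ e^{−bu} − λ̄ u) du`. -/
def gibbsMeasure (b βv lv : ℝ) : Measure ℝ :=
  volume.withDensity fun u => ENNReal.ofReal ((Zbar b βv lv)⁻¹ * gibbsDensity b βv lv u)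

/-- The equilibrium product measure `μ_{β̄,λ̄}` on `Ω_n = ℝ^{T_n}`. -/
def muEq (n : ℕ) [NeZero n] (b βv lv : ℝ) : Measure (ZMod n → ℝ) :=
  Measure.pi fun _ : ZMod n => gibbsMeasure b βv lv

/-! ### Auxiliary lemmas -/

lemma exp_ge_sq_div_four {t : ℝ} (ht : 0 ≤ t) : t ^ 2 / 4 ≤ Real.exp t := by
  have h1 : t / 2 + 1 ≤ Real.exp (t / 2) := by
    have := Real.add_one_le_exp (t / 2); linarith
  have h2 : Real.exp (t / 2) * Real.exp (t / 2) = Real.exp t := by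
    rw [← Real.exp_add]; ring_nf
  nlinarith [Real.exp_pos (t / 2)]

/-- The master integrability lemma: the Gibbs-type density is integrable. -/
lemma integrable_gibbs_aux {β b l : ℝ} (hβ : 0 < β) (hb : 0 < b) (hl : 0 < l) :
    Integrable (fun u : ℝ => Real.exp (-(β * Real.exp (-(b * u))) - l * u)) := by
  have hcont : Continuous fun u : ℝ => Real.exp (-(β * Real.exp (-(b * u))) - l * u) := by
    fun_prop
  rw [← integrableOn_univ, ← Set.Iic_union_Ioi (a := (0 : ℝ))]
  refine IntegrableOn.union ?_ ?_
  · -- on `Iic 0`, bound by a Gaussian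
    set c : ℝ := β * b ^ 2 / 8 with hc
    have hcpos : 0 < c := by positivity
    have hbound : Integrable fun u : ℝ =>
        Real.exp (l ^ 2 / (4 * c)) * Real.exp (-c * u ^ 2) :=
      (integrable_exp_neg_mul_sq hcpos).const_mul _
    refine Integrable.mono' hbound.integrableOn hcont.aestronglyMeasurable.restrict ?_
    filter_upwards [ae_restrict_mem measurableSet_Iic] with u hu
    have hu0 : u ≤ 0 := hu
    rw [Real.norm_eq_abs, abs_of_nonneg (Real.exp_pos _).le, ← Real.exp_add]
    apply Real.exp_le_exp.mpr
    have hbu : 0 ≤ -(b * u) := by nlinarith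
    have h1 : (b * u) ^ 2 / 4 ≤ Real.exp (-(b * u)) := by
      have := exp_ge_sq_div_four hbu
      calc (b * u) ^ 2 / 4 = (-(b * u)) ^ 2 / 4 := by ring
        _ ≤ Real.exp (-(b * u)) := this
    have h2 : 2 * c * u ^ 2 ≤ β * Real.exp (-(b * u)) := by
      have := mul_le_mul_of_nonneg_left h1 hβ.le
      have hcu : 2 * c * u ^ 2 = β * ((b * u) ^ 2 / 4) := by rw [hc]; ring
      linarith
    have key : 0 ≤ c * u ^ 2 + l * u + l ^ 2 / (4 * c) := by
      have heq : c * u ^ 2 + l * u + l ^ 2 / (4 * c) = (2 * c * u + l) ^ 2 / (4 * c) := by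
        field_simp; ring
      rw [heq]; positivity
    linarith
  · -- on `Ioi 0`, bound by `exp (-l u)`
    refine Integrable.mono' (exp_neg_integrableOn_Ioi 0 hl)
      hcont.aestronglyMeasurable.restrict ?_
    filter_upwards [ae_restrict_mem measurableSet_Ioi] with u _
    rw [Real.norm_eq_abs, abs_of_nonneg (Real.exp_pos _).le]
    apply Real.exp_le_exp.mpr
    have := Real.exp_pos (-(b * u))
    nlinarith [hβ]

/-- Integrability of `|u|` against the Gibbs-type density. -/
lemma integrable_abs_gibbs_aux {β b l : ℝ} (hβ : 0 < β) (hb : 0 < b) (hl : 0 < l) :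
    Integrable (fun u : ℝ => |u| * Real.exp (-(β * Real.exp (-(b * u))) - l * u)) := by
  have hbound : Integrable fun u : ℝ => (2 / l) *
      (Real.exp (-(β * Real.exp (-(b * u))) - (l / 2) * u)
        + Real.exp (-(β * Real.exp (-(b * u))) - (3 * l / 2) * u)) :=
    ((integrable_gibbs_aux hβ hb (by linarith)).add
      (integrable_gibbs_aux hβ hb (by linarith))).const_mul _
  have hcont : Continuous fun u : ℝ =>
      |u| * Real.exp (-(β * Real.exp (-(b * u))) - l * u) := by fun_prop
  refine Integrable.mono' hbound hcont.aestronglyMeasurable ?_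
  filter_upwards with u
  rw [Real.norm_eq_abs, abs_of_nonneg (by positivity)]
  have habs : |u| ≤ (2 / l) * (Real.exp ((l / 2) * u) + Real.exp (-((l / 2) * u))) := by
    have h0 : (l / 2) * |u| + 1 ≤ Real.exp ((l / 2) * |u|) := Real.add_one_le_exp _
    have h1 : Real.exp ((l / 2) * |u|)
        ≤ Real.exp ((l / 2) * u) + Real.exp (-((l / 2) * u)) := by
      rcases abs_cases u with ⟨h, _⟩ | ⟨h, _⟩
      · rw [h]; linarith [Real.exp_pos (-((l / 2) * u))]
      · rw [h, show (l / 2) * (-u) = -((l / 2) * u) by ring]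
        linarith [Real.exp_pos ((l / 2) * u)]
    have h2 : (l / 2) * |u| ≤ Real.exp ((l / 2) * u) + Real.exp (-((l / 2) * u)) := by
      linarith
    calc |u| = (2 / l) * ((l / 2) * |u|) := by field_simp
      _ ≤ (2 / l) * (Real.exp ((l / 2) * u) + Real.exp (-((l / 2) * u))) := by
          apply mul_le_mul_of_nonneg_left h2 (by positivity)
  have e1 : Real.exp ((l / 2) * u) * Real.exp (-(β * Real.exp (-(b * u))) - l * u)
      = Real.exp (-(β * Real.exp (-(b * u))) - (l / 2) * u) := by
    rw [← Real.exp_add]; congr 1; ring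
  have e2 : Real.exp (-((l / 2) * u)) * Real.exp (-(β * Real.exp (-(b * u))) - l * u)
      = Real.exp (-(β * Real.exp (-(b * u))) - (3 * l / 2) * u) := by
    rw [← Real.exp_add]; congr 1; ring
  calc |u| * Real.exp (-(β * Real.exp (-(b * u))) - l * u)
      ≤ ((2 / l) * (Real.exp ((l / 2) * u) + Real.exp (-((l / 2) * u)))) *
          Real.exp (-(β * Real.exp (-(b * u))) - l * u) :=
        mul_le_mul_of_nonneg_right habs (Real.exp_pos _).le
    _ = (2 / l) * (Real.exp (-(β * Real.exp (-(b * u))) - (l / 2) * u)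
          + Real.exp (-(β * Real.exp (-(b * u))) - (3 * l / 2) * u)) := by
        rw [← e1, ← e2]; ring

/-- Product of integrable functions of coordinates is integrable w.r.t. `Measure.pi`. -/
lemma pi_integrable_prod {ι : Type*} [Fintype ι] {μ : Measure ℝ} [SigmaFinite μ]
    {f : ι → ℝ → ℝ} (hf : ∀ i, Integrable (f i) μ) :
    Integrable (fun x : ι → ℝ => ∏ i, f i (x i)) (Measure.pi fun _ => μ) := by
  letI : MeasureSpace ℝ := ⟨μ⟩
  haveI : SigmaFinite (volume : Measure ℝ) := ‹SigmaFinite μ›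
  exact Integrable.fintype_prod (𝕜 := ℝ) hf

/-- Fubini for products of coordinate functions, for a general product measure. -/
lemma pi_integral_prod {ι : Type*} [Fintype ι] {μ : Measure ℝ} [SigmaFinite μ]
    (f : ι → ℝ → ℝ) :
    ∫ x : ι → ℝ, ∏ i, f i (x i) ∂(Measure.pi fun _ => μ) = ∏ i, ∫ u, f i u ∂μ := by
  letI : MeasureSpace ℝ := ⟨μ⟩
  haveI : SigmaFinite (volume : Measure ℝ) := ‹SigmaFinite μ›
  exact integral_fintype_prod_eq_prod f

/-- under the equilibrium product measure, the mean energy current is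
`∫ j̄ᵉ_{x,x+1} dμ = −α_n b² (e − b v)² + α_n b²`, where `e = ∫ V_b(η_x) dμ` and
`v = ∫ η_x dμ`; all the integrals appearing are finite. -/
theorem mean_energy_current
    (n : ℕ) [NeZero n] (hn : 3 ≤ n) (b βv lv : ℝ) (hb : 0 < b) (hβ : 0 < βv) (hl : 0 < lv)
    (αn γ : ℝ) (hγ : 0 < γ) (x : ZMod n) :
    Integrable (fun η => je n b αn γ η x) (muEq n b βv lv) ∧
    Integrable (fun η : ZMod n → ℝ => Vb b (η x)) (muEq n b βv lv) ∧
    Integrable (fun η : ZMod n → ℝ => η x) (muEq n b βv lv) ∧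
    ∫ η, je n b αn γ η x ∂(muEq n b βv lv)
      = -αn * b ^ 2 *
          ((∫ η, Vb b (η x) ∂(muEq n b βv lv)) - b * ∫ η, η x ∂(muEq n b βv lv)) ^ 2
        + αn * b ^ 2 := by
  -- basic facts about the single-site density
  have hgd_eq : gibbsDensity b βv lv
      = fun u => Real.exp (-(βv * Real.exp (-(b * u))) - lv * u) := rfl
  have hgd_int : Integrable (gibbsDensity b βv lv) := by
    rw [hgd_eq]; exact integrable_gibbs_aux hβ hb hl
  have hgd_pos : ∀ u, 0 < gibbsDensity b βv lv u := fun u => Real.exp_pos _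
  have hgd_cont : Continuous (gibbsDensity b βv lv) := by rw [hgd_eq]; fun_prop
  have hZ : 0 < Zbar b βv lv := by
    rw [Zbar]
    rw [integral_pos_iff_support_of_nonneg (fun u => (hgd_pos u).le) hgd_int]
    have hs : Function.support (gibbsDensity b βv lv) = Set.univ :=
      Set.eq_univ_of_forall fun u => (hgd_pos u).ne'
    rw [hs]
    simp [Real.volume_univ]
  have hdens_nonneg : ∀ u, 0 ≤ (Zbar b βv lv)⁻¹ * gibbsDensity b βv lv u :=
    fun u => mul_nonneg (inv_nonneg.mpr hZ.le) (hgd_pos u).le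
  have hdens_meas : Measurable fun u =>
      ENNReal.ofReal ((Zbar b βv lv)⁻¹ * gibbsDensity b βv lv u) :=
    (continuous_const.mul hgd_cont).measurable.ennreal_ofReal
  -- the Gibbs measure is a probability measure
  haveI hprob : IsProbabilityMeasure (gibbsMeasure b βv lv) := by
    constructor
    rw [gibbsMeasure, withDensity_apply _ MeasurableSet.univ, setLIntegral_univ,
      ← ofReal_integral_eq_lintegral_ofReal (hgd_int.const_mul _)
        (Filter.Eventually.of_forall hdens_nonneg),
      integral_const_mul]
    rw [show (∫ u : ℝ, gibbsDensity b βv lv u) = Zbar b βv lv from rfl,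
      inv_mul_cancel₀ hZ.ne', ENNReal.ofReal_one]
  -- transfer of integrability from the Gibbs measure to Lebesgue measure
  have hiff : ∀ f : ℝ → ℝ, Integrable f (gibbsMeasure b βv lv) ↔
      Integrable (fun u => f u * ((Zbar b βv lv)⁻¹ * gibbsDensity b βv lv u)) := by
    intro f
    rw [gibbsMeasure, integrable_withDensity_iff hdens_meas
      (Filter.Eventually.of_forall fun u => ENNReal.ofReal_lt_top)]
    have : (fun u => f u * (ENNReal.ofReal
          ((Zbar b βv lv)⁻¹ * gibbsDensity b βv lv u)).toReal)
        = fun u => f u * ((Zbar b βv lv)⁻¹ * gibbsDensity b βv lv u) :=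
      funext fun u => by rw [ENNReal.toReal_ofReal (hdens_nonneg u)]
    rw [this]
  -- single-site integrable functions
  have hA_int : Integrable (fun u => Real.exp (-(b * u))) (gibbsMeasure b βv lv) := by
    rw [hiff]
    have h := (integrable_gibbs_aux hβ hb (show 0 < lv + b by linarith)).const_mul
      ((Zbar b βv lv)⁻¹)
    refine h.congr (Filter.Eventually.of_forall fun u => ?_)
    show (Zbar b βv lv)⁻¹ * Real.exp (-(βv * Real.exp (-(b * u))) - (lv + b) * u)
      = Real.exp (-(b * u)) * ((Zbar b βv lv)⁻¹ * gibbsDensity b βv lv u)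
    simp only [gibbsDensity]
    rw [show -(βv * Real.exp (-(b * u))) - (lv + b) * u
        = -(b * u) + (-(βv * Real.exp (-(b * u))) - lv * u) by ring, Real.exp_add]
    ring
  have hu_int : Integrable (fun u : ℝ => u) (gibbsMeasure b βv lv) := by
    rw [hiff]
    have hbd := (integrable_abs_gibbs_aux hβ hb hl).const_mul ((Zbar b βv lv)⁻¹)
    refine Integrable.mono' hbd ?_ ?_
    · exact (continuous_id.mul (continuous_const.mul hgd_cont)).aestronglyMeasurable
    · filter_upwards with u
      show ‖u * ((Zbar b βv lv)⁻¹ * gibbsDensity b βv lv u)‖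
        ≤ (Zbar b βv lv)⁻¹ * (|u| * Real.exp (-(βv * Real.exp (-(b * u))) - lv * u))
      simp only [gibbsDensity, Real.norm_eq_abs, abs_mul]
      rw [abs_of_nonneg (inv_nonneg.mpr hZ.le),
        abs_of_nonneg (Real.exp_pos (-(βv * Real.exp (-(b * u))) - lv * u)).le]
      exact le_of_eq (by ring)
  have hexp1 : Integrable (fun u : ℝ => Real.exp (-(b * u)) - 1) (gibbsMeasure b βv lv) := by
    exact hA_int.sub (integrable_const 1)
  have hbu : Integrable (fun u : ℝ => b * u) (gibbsMeasure b βv lv) := by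
    exact hu_int.const_mul b
  have hVb_int : Integrable (fun u => Vb b u) (gibbsMeasure b βv lv) := by
    unfold Vb
    exact hexp1.add hbu
  -- value of the mean of Vb
  have hint1 : (∫ u : ℝ, Real.exp (-(b * u)) - 1 ∂(gibbsMeasure b βv lv))
      = (∫ u, Real.exp (-(b * u)) ∂(gibbsMeasure b βv lv)) - 1 := by
    rw [integral_sub hA_int (integrable_const 1)]
    simp
  have hVbval : ∫ u, Vb b u ∂(gibbsMeasure b βv lv)
      = (∫ u, Real.exp (-(b * u)) ∂(gibbsMeasure b βv lv)) - 1
        + b * ∫ u, u ∂(gibbsMeasure b βv lv) := by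
    unfold Vb
    rw [integral_add hexp1 hbu, hint1, integral_const_mul]
  -- one-coordinate lemma
  have hone : ∀ f : ℝ → ℝ, Integrable f (gibbsMeasure b βv lv) → ∀ z : ZMod n,
      Integrable (fun η : ZMod n → ℝ => f (η z)) (muEq n b βv lv) ∧
      ∫ η, f (η z) ∂(muEq n b βv lv) = ∫ u, f u ∂(gibbsMeasure b βv lv) := by
    intro f hf z
    set F : ZMod n → ℝ → ℝ := fun i u => if i = z then f u else 1 with hF
    have hFi : ∀ i, Integrable (F i) (gibbsMeasure b βv lv) := by
      intro i
      by_cases h : i = z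
      · simpa [hF, h] using hf
      · simp only [hF, h, if_false]; exact integrable_const 1
    have heq : ∀ η : ZMod n → ℝ, (∏ i, F i (η i)) = f (η z) := by
      intro η
      have := Finset.prod_ite_eq' Finset.univ z (fun i => f (η i))
      simpa [hF] using this
    constructor
    · have h1 := pi_integrable_prod (μ := gibbsMeasure b βv lv) hFi
      rw [muEq]
      exact h1.congr (Filter.Eventually.of_forall fun η => heq η)
    · rw [muEq]
      calc ∫ η : ZMod n → ℝ, f (η z) ∂(Measure.pi fun _ => gibbsMeasure b βv lv)
          = ∫ η : ZMod n → ℝ, ∏ i, F i (η i) ∂(Measure.pi fun _ => gibbsMeasure b βv lv) :=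
            integral_congr_ae (Filter.Eventually.of_forall fun η => (heq η).symm)
        _ = ∏ i, ∫ u, F i u ∂(gibbsMeasure b βv lv) := pi_integral_prod F
        _ = ∫ u, f u ∂(gibbsMeasure b βv lv) := by
            rw [show (fun i => ∫ u, F i u ∂(gibbsMeasure b βv lv))
                = fun i => if i = z then ∫ u, f u ∂(gibbsMeasure b βv lv) else 1 from
              funext fun i => by by_cases h : i = z <;> simp [hF, h]]
            rw [Finset.prod_ite_eq' Finset.univ z
              (fun _ => ∫ u, f u ∂(gibbsMeasure b βv lv))]
            simp
  -- two-coordinate lemma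
  have htwo : ∀ f g : ℝ → ℝ, Integrable f (gibbsMeasure b βv lv) →
      Integrable g (gibbsMeasure b βv lv) → ∀ z w : ZMod n, z ≠ w →
      Integrable (fun η : ZMod n → ℝ => f (η z) * g (η w)) (muEq n b βv lv) ∧
      ∫ η, f (η z) * g (η w) ∂(muEq n b βv lv)
        = (∫ u, f u ∂(gibbsMeasure b βv lv)) * ∫ u, g u ∂(gibbsMeasure b βv lv) := by
    intro f g hf hg z w hzw
    set G : ZMod n → ℝ → ℝ := fun i u => if i = z then f u else if i = w then g u else 1
      with hG
    have hGi : ∀ i, Integrable (G i) (gibbsMeasure b βv lv) := by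
      intro i
      by_cases h1 : i = z
      · simpa [hG, h1] using hf
      · by_cases h2 : i = w
        · simpa [hG, h1, h2, hzw.symm] using hg
        · simp only [hG, h1, h2, if_false]; exact integrable_const 1
    have heq : ∀ η : ZMod n → ℝ, (∏ i, G i (η i)) = f (η z) * g (η w) := by
      intro η
      have hsub : (∏ i ∈ ({z, w} : Finset (ZMod n)), G i (η i))
          = ∏ i : ZMod n, G i (η i) := by
        refine Finset.prod_subset (Finset.subset_univ _) fun i _ hi => ?_
        simp only [Finset.mem_insert, Finset.mem_singleton, not_or] at hi
        simp [hG, hi.1, hi.2]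
      rw [← hsub, Finset.prod_pair hzw]
      simp [hG, hzw.symm]
    have hval : (∏ i, ∫ u, G i u ∂(gibbsMeasure b βv lv))
        = (∫ u, f u ∂(gibbsMeasure b βv lv)) * ∫ u, g u ∂(gibbsMeasure b βv lv) := by
      have hsub : (∏ i ∈ ({z, w} : Finset (ZMod n)), ∫ u, G i u ∂(gibbsMeasure b βv lv))
          = ∏ i : ZMod n, ∫ u, G i u ∂(gibbsMeasure b βv lv) := by
        refine Finset.prod_subset (Finset.subset_univ _) fun i _ hi => ?_
        simp only [Finset.mem_insert, Finset.mem_singleton, not_or] at hi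
        simp [hG, hi.1, hi.2]
      rw [← hsub, Finset.prod_pair hzw]
      simp [hG, hzw.symm]
    constructor
    · have h1 := pi_integrable_prod (μ := gibbsMeasure b βv lv) hGi
      rw [muEq]
      exact h1.congr (Filter.Eventually.of_forall fun η => heq η)
    · rw [muEq]
      calc ∫ η : ZMod n → ℝ, f (η z) * g (η w) ∂(Measure.pi fun _ => gibbsMeasure b βv lv)
          = ∫ η : ZMod n → ℝ, ∏ i, G i (η i) ∂(Measure.pi fun _ => gibbsMeasure b βv lv) :=
            integral_congr_ae (Filter.Eventually.of_forall fun η => (heq η).symm)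
        _ = ∏ i, ∫ u, G i u ∂(gibbsMeasure b βv lv) := pi_integral_prod G
        _ = (∫ u, f u ∂(gibbsMeasure b βv lv)) * ∫ u, g u ∂(gibbsMeasure b βv lv) := hval
  -- x and x+1 are distinct
  haveI : Fact (1 < n) := ⟨by omega⟩
  have hxy : x ≠ x + 1 := by
    intro h
    have h0 : x + 0 = x + 1 := by simpa using h
    exact one_ne_zero (add_left_cancel h0).symm
  -- the pieces, with beta-reduced statements
  have h1i : Integrable (fun η : ZMod n → ℝ => Real.exp (-(b * η x))) (muEq n b βv lv) :=
    (hone _ hA_int x).1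
  have h1v : (∫ η, Real.exp (-(b * η x)) ∂(muEq n b βv lv))
      = ∫ u, Real.exp (-(b * u)) ∂(gibbsMeasure b βv lv) := (hone _ hA_int x).2
  have h2i : Integrable (fun η : ZMod n → ℝ => Real.exp (-(b * η (x + 1)))) (muEq n b βv lv) :=
    (hone _ hA_int (x + 1)).1
  have h2v : (∫ η, Real.exp (-(b * η (x + 1))) ∂(muEq n b βv lv))
      = ∫ u, Real.exp (-(b * u)) ∂(gibbsMeasure b βv lv) := (hone _ hA_int (x + 1)).2
  have h3i : Integrable (fun η : ZMod n → ℝ => Vb b (η x)) (muEq n b βv lv) :=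
    (hone _ hVb_int x).1
  have h3v : (∫ η, Vb b (η x) ∂(muEq n b βv lv))
      = ∫ u, Vb b u ∂(gibbsMeasure b βv lv) := (hone _ hVb_int x).2
  have h4i : Integrable (fun η : ZMod n → ℝ => Vb b (η (x + 1))) (muEq n b βv lv) :=
    (hone _ hVb_int (x + 1)).1
  have h4v : (∫ η, Vb b (η (x + 1)) ∂(muEq n b βv lv))
      = ∫ u, Vb b u ∂(gibbsMeasure b βv lv) := (hone _ hVb_int (x + 1)).2
  have h5i : Integrable (fun η : ZMod n → ℝ => η x) (muEq n b βv lv) :=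
    (hone _ hu_int x).1
  have h5v : (∫ η, η x ∂(muEq n b βv lv)) = ∫ u, u ∂(gibbsMeasure b βv lv) :=
    (hone _ hu_int x).2
  have h6i : Integrable
      (fun η : ZMod n → ℝ => Real.exp (-(b * η x)) * Real.exp (-(b * η (x + 1))))
      (muEq n b βv lv) := (htwo _ _ hA_int hA_int x (x + 1) hxy).1
  have h6v : (∫ η, Real.exp (-(b * η x)) * Real.exp (-(b * η (x + 1))) ∂(muEq n b βv lv))
      = (∫ u, Real.exp (-(b * u)) ∂(gibbsMeasure b βv lv))
        * ∫ u, Real.exp (-(b * u)) ∂(gibbsMeasure b βv lv) :=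
    (htwo _ _ hA_int hA_int x (x + 1) hxy).2
  -- rewrite je
  have hje : (fun η : ZMod n → ℝ => je n b αn γ η x)
      = fun η => -αn * b ^ 2 * (Real.exp (-(b * η x)) * Real.exp (-(b * η (x + 1))))
          + αn * b ^ 2 * (Real.exp (-(b * η x)) + Real.exp (-(b * η (x + 1))))
          - γ * (Vb b (η (x + 1)) - Vb b (η x)) := by
    funext η
    simp only [je]
    rw [show -(b * (η x + η (x + 1))) = -(b * η x) + -(b * η (x + 1)) by ring, Real.exp_add]
  -- combined integrable pieces
  have hT1 : Integrable (fun η : ZMod n → ℝ =>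
      -αn * b ^ 2 * (Real.exp (-(b * η x)) * Real.exp (-(b * η (x + 1)))))
      (muEq n b βv lv) := by exact h6i.const_mul _
  have hT2 : Integrable (fun η : ZMod n → ℝ =>
      Real.exp (-(b * η x)) + Real.exp (-(b * η (x + 1)))) (muEq n b βv lv) := by
    exact h1i.add h2i
  have hT2' : Integrable (fun η : ZMod n → ℝ =>
      αn * b ^ 2 * (Real.exp (-(b * η x)) + Real.exp (-(b * η (x + 1)))))
      (muEq n b βv lv) := by exact hT2.const_mul _
  have hT3 : Integrable (fun η : ZMod n → ℝ =>
      Vb b (η (x + 1)) - Vb b (η x)) (muEq n b βv lv) := by exact h4i.sub h3i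
  have hT3' : Integrable (fun η : ZMod n → ℝ =>
      γ * (Vb b (η (x + 1)) - Vb b (η x))) (muEq n b βv lv) := by exact hT3.const_mul γ
  have hsum : Integrable (fun η : ZMod n → ℝ =>
      -αn * b ^ 2 * (Real.exp (-(b * η x)) * Real.exp (-(b * η (x + 1))))
        + αn * b ^ 2 * (Real.exp (-(b * η x)) + Real.exp (-(b * η (x + 1)))))
      (muEq n b βv lv) := by exact hT1.add hT2'
  refine ⟨?_, h3i, h5i, ?_⟩
  · rw [hje]
    exact hsum.sub hT3'
  · rw [hje, h3v, h5v, hVbval]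
    rw [integral_sub hsum hT3', integral_add hT1 hT2', integral_const_mul,
      integral_const_mul, integral_const_mul, integral_sub h4i h3i, h4v, h3v,
      integral_add h1i h2i, h1v, h2v, h6v]
    ring

end
end

section
/- L² bound on the time-integrated quadratic fluctuation term for a stationary process with product marginals: fix an integer n ≥ 3, reals T > 0, ρ ∈ ℝ, τ ≥ 0, let (Ω, 𝓕, P) be a probability space and X : [0,T] × Ω → ℝ^{ℤ/nℤ} a jointly measurable process such that for every s ∈ [0,T] the law of X_s is a product measure whose coordinates are i.i.d. with mean ρ and variance τ². Let g : [0,T] × ℤ/nℤ → ℝ be measurable with ∫_0^T Σ_x g(s,x)² ds < ∞. Then for every t ∈ [0,T], E_P[ ( ∫_0^t Σ_{x ∈ ℤ/nℤ} g(s,x) (X_s(x) − ρ)(X_s(x+1) − ρ) ds )² ] ≤ t τ⁴ ∫_0^t Σ_{x ∈ ℤ/nℤ} g(s,x)² ds, where the index x+1 is taken cyclically. -/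
open MeasureTheory Finset

open scoped ENNReal

noncomputable section


lemma aux_CS {α : Type*} [MeasurableSpace α] (μ : Measure α) (f : α → ℝ) :
    ENNReal.ofReal ((∫ a, f a ∂μ) ^ 2) ≤ μ Set.univ * ∫⁻ a, ENNReal.ofReal ((f a) ^ 2) ∂μ := by
  by_cases hf : Integrable f μ
  · have habs : ‖∫ a, f a ∂μ‖ ≤ ∫ a, ‖f a‖ ∂μ := norm_integral_le_integral_norm f
    have h1 : ENNReal.ofReal ((∫ a, f a ∂μ) ^ 2) ≤ (∫⁻ a, ENNReal.ofReal ‖f a‖ ∂μ) ^ 2 := by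
      rw [← sq_abs, ← Real.norm_eq_abs, ← ofReal_integral_eq_lintegral_ofReal hf.norm
        (Filter.Eventually.of_forall fun a => norm_nonneg _), ← ENNReal.ofReal_pow
        (integral_nonneg fun a => norm_nonneg _)]
      exact ENNReal.ofReal_le_ofReal (pow_le_pow_left₀ (norm_nonneg _) habs 2)
    refine h1.trans ?_
    have hmeas : AEMeasurable (fun a => ENNReal.ofReal ‖f a‖) μ :=
      ENNReal.measurable_ofReal.comp_aemeasurable hf.1.norm.aemeasurable
    have hpq : Real.HolderConjugate 2 2 := ⟨by norm_num, by norm_num, by norm_num⟩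
    have hCS := ENNReal.lintegral_mul_le_Lp_mul_Lq μ hpq
      (aemeasurable_const (b := (1 : ℝ≥0∞))) hmeas
    simp only [Pi.mul_apply, one_mul, ENNReal.one_rpow, lintegral_const, mul_one] at hCS
    calc (∫⁻ a, ENNReal.ofReal ‖f a‖ ∂μ) ^ 2
        ≤ ((μ Set.univ) ^ (1/(2:ℝ)) * (∫⁻ a, ENNReal.ofReal ‖f a‖ ^ (2:ℝ) ∂μ) ^ (1/(2:ℝ))) ^ 2 :=
          pow_le_pow_left' hCS 2
      _ = μ Set.univ * ∫⁻ a, ENNReal.ofReal ‖f a‖ ^ (2:ℝ) ∂μ := by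
          rw [mul_pow, ← ENNReal.rpow_natCast (_ ^ (1/(2:ℝ))), ← ENNReal.rpow_natCast (_ ^ (1/(2:ℝ))),
            ← ENNReal.rpow_mul, ← ENNReal.rpow_mul]
          norm_num
      _ = μ Set.univ * ∫⁻ a, ENNReal.ofReal ((f a) ^ 2) ∂μ := by
          congr 1
          refine lintegral_congr fun a => ?_
          rw [ENNReal.ofReal_rpow_of_nonneg (norm_nonneg _) (by norm_num : (0:ℝ) ≤ 2),
            show ((2:ℝ)) = ((2:ℕ):ℝ) by norm_num, Real.rpow_natCast]
          norm_num [Real.norm_eq_abs, sq_abs]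
  · rw [integral_undef hf]
    simp


lemma aux_pi_integrable {ι : Type*} [Fintype ι] (ν : Measure ℝ) [IsProbabilityMeasure ν]
    (f : ι → ℝ → ℝ) (hf : ∀ i, Integrable (f i) ν) :
    Integrable (fun y : ι → ℝ => ∏ i, f i (y i)) (Measure.pi fun _ => ν) := by
  letI : MeasureSpace ℝ := ⟨ν⟩
  haveI : SigmaFinite (volume : Measure ℝ) := (inferInstance : SigmaFinite ν)
  exact MeasureTheory.Integrable.fintype_prod (𝕜 := ℝ) hf

lemma aux_pi_integral {ι : Type*} [Fintype ι] (ν : Measure ℝ) [IsProbabilityMeasure ν]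
    (f : ι → ℝ → ℝ) :
    ∫ y : ι → ℝ, ∏ i, f i (y i) ∂(Measure.pi fun _ => ν) = ∏ i, ∫ u, f i u ∂ν := by
  letI : MeasureSpace ℝ := ⟨ν⟩
  haveI : SigmaFinite (volume : Measure ℝ) := (inferInstance : SigmaFinite ν)
  exact MeasureTheory.integral_fintype_prod_eq_prod (𝕜 := ℝ) f

/-- multiplicity of coordinate `i` in the monomial for the pair `(x, z)` -/
def dmul {n : ℕ} (x z i : ZMod n) : ℕ :=
  ((if i = x then 1 else 0) + (if i = x + 1 then 1 else 0))
    + ((if i = z then 1 else 0) + (if i = z + 1 then 1 else 0))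

set_option maxHeartbeats 1000000 in
lemma aux_moment {n : ℕ} [NeZero n] (hn : 3 ≤ n) (ρ τ : ℝ)
    (ν : Measure ℝ) [IsProbabilityMeasure ν]
    (hL2 : MemLp (fun u : ℝ => u) 2 ν)
    (hmean : ∫ u : ℝ, u ∂ν = ρ)
    (hvar : ∫ u : ℝ, (u - ρ) ^ 2 ∂ν = τ ^ 2)
    (c : ZMod n → ℝ) :
    Integrable (fun y : ZMod n → ℝ => (∑ x : ZMod n, c x * ((y x - ρ) * (y (x + 1) - ρ))) ^ 2)
      (Measure.pi fun _ : ZMod n => ν)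
    ∧ ∫ y : ZMod n → ℝ, (∑ x : ZMod n, c x * ((y x - ρ) * (y (x + 1) - ρ))) ^ 2
        ∂(Measure.pi fun _ : ZMod n => ν) = τ ^ 4 * ∑ x : ZMod n, (c x) ^ 2 := by
  have h1 : (1 : ZMod n) ≠ 0 := by
    have : ((1 : ℕ) : ZMod n) ≠ 0 := by
      rw [Ne, ZMod.natCast_eq_zero_iff]
      intro h; have := Nat.le_of_dvd one_pos h; omega
    simpa using this
  have h2 : (2 : ZMod n) ≠ 0 := by
    have : ((2 : ℕ) : ZMod n) ≠ 0 := by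
      rw [Ne, ZMod.natCast_eq_zero_iff]
      intro h; have := Nat.le_of_dvd two_pos h; omega
    simpa using this
  have hna : ∀ a : ZMod n, a ≠ a + 1 := by
    intro a h; exact h1 (by simpa using (left_eq_add.mp h))
  have hna2 : ∀ a : ZMod n, a ≠ a + 2 := by
    intro a h; exact h2 (by simpa using (left_eq_add.mp h))
  have hd2 : ∀ x z i : ZMod n, dmul x z i ≤ 2 := by
    have he : ∀ a i : ZMod n, ((if i = a then 1 else 0) + (if i = a + 1 then 1 else 0)) ≤ 1 := by
      intro a i
      rcases eq_or_ne i a with h | h <;> rcases eq_or_ne i (a + 1) with h' | h'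
      · exact absurd (h.symm.trans h') (hna a)
      all_goals simp [h, h', h1]
    intro x z i
    exact add_le_add (he x i) (he z i)
  have hint : ∀ k, k ≤ 2 → Integrable (fun u : ℝ => (u - ρ) ^ k) ν := by
    intro k hk
    interval_cases k
    · simpa using (integrable_const (1 : ℝ) (μ := ν))
    · simpa [Pi.sub_def] using (hL2.integrable one_le_two).sub (integrable_const ρ)
    · exact (hL2.sub (memLp_const ρ)).integrable_sq
  have m1 : ∫ u : ℝ, (u - ρ) ^ 1 ∂ν = 0 := by
    simp only [pow_one]
    rw [integral_sub (hL2.integrable one_le_two) (integrable_const ρ), hmean]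
    simp
  have hsingle : ∀ (a : ZMod n) (y : ZMod n → ℝ),
      ∏ i : ZMod n, (y i - ρ) ^ (if i = a then 1 else 0) = y a - ρ := by
    intro a y
    rw [Finset.prod_congr rfl (fun i _ => by rw [pow_ite, pow_one, pow_zero]),
      Finset.prod_ite_eq' univ a (fun i => y i - ρ)]
    simp
  have hprod : ∀ (x z : ZMod n) (y : ZMod n → ℝ),
      (c x * ((y x - ρ) * (y (x + 1) - ρ))) * (c z * ((y z - ρ) * (y (z + 1) - ρ)))
        = (c x * c z) * ∏ i : ZMod n, (y i - ρ) ^ (dmul x z i) := by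
    intro x z y
    unfold dmul
    simp only [pow_add, Finset.prod_mul_distrib, hsingle]
    ring
  have hterm_int : ∀ x z : ZMod n,
      Integrable (fun y : ZMod n → ℝ => ∏ i : ZMod n, (y i - ρ) ^ (dmul x z i))
        (Measure.pi fun _ : ZMod n => ν) :=
    fun x z => aux_pi_integrable ν _ (fun i => hint _ (hd2 x z i))
  have hval : ∀ x z : ZMod n,
      ∫ y : ZMod n → ℝ, ∏ i : ZMod n, (y i - ρ) ^ (dmul x z i)
        ∂(Measure.pi fun _ : ZMod n => ν) = if x = z then τ ^ 4 else 0 := by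
    intro x z
    rw [aux_pi_integral ν (fun i u => (u - ρ) ^ (dmul x z i))]
    by_cases hxz : x = z
    · subst hxz
      rw [if_pos rfl]
      have hpt : ∀ i : ZMod n, (∫ u : ℝ, (u - ρ) ^ (dmul x x i) ∂ν)
          = (if i = x then τ ^ 2 else 1) * (if i = x + 1 then τ ^ 2 else 1) := by
        intro i
        by_cases ha : i = x
        · subst ha
          simp [dmul, hna i, hvar]
        · by_cases hb : i = x + 1
          · subst hb
            have hne : ¬ x + 1 = x := fun h => hna x h.symm
            simp [dmul, hne, hvar]
          · simp [dmul, ha, hb]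
      rw [Finset.prod_congr rfl (fun i _ => hpt i), Finset.prod_mul_distrib,
        Finset.prod_ite_eq' univ x (fun _ => τ ^ 2),
        Finset.prod_ite_eq' univ (x + 1) (fun _ => τ ^ 2)]
      simp; ring
    · rw [if_neg hxz]
      by_cases hx : x = z + 1
      · apply Finset.prod_eq_zero (Finset.mem_univ z)
        have hz : ¬ z = x + 1 := by
          intro h; rw [hx] at h
          exact hna2 z (by linear_combination h)
        have hzx : ¬ z = x := fun h => hxz h.symm
        have hd : dmul x z z = 1 := by
          unfold dmul
          rw [if_neg hzx, if_neg hz, if_pos rfl, if_neg (hna z)]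
        rw [hd, m1]
      · apply Finset.prod_eq_zero (Finset.mem_univ x)
        have hd : dmul x z x = 1 := by
          unfold dmul
          rw [if_pos rfl, if_neg (hna x), if_neg hxz, if_neg hx]
        rw [hd, m1]
  have hsq : ∀ y : ZMod n → ℝ,
      (∑ x : ZMod n, c x * ((y x - ρ) * (y (x + 1) - ρ))) ^ 2
        = ∑ x : ZMod n, ∑ z : ZMod n, (c x * c z) * ∏ i : ZMod n, (y i - ρ) ^ (dmul x z i) := by
    intro y
    rw [sq, Finset.sum_mul_sum]
    exact Finset.sum_congr rfl fun x _ => Finset.sum_congr rfl fun z _ => hprod x z y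
  have hintsum : Integrable
      (fun y : ZMod n → ℝ => ∑ x : ZMod n, ∑ z : ZMod n,
        (c x * c z) * ∏ i : ZMod n, (y i - ρ) ^ (dmul x z i)) (Measure.pi fun _ : ZMod n => ν) :=
    integrable_finset_sum _ (fun x _ => integrable_finset_sum _
      (fun z _ => (hterm_int x z).const_mul _))
  constructor
  · exact hintsum.congr (Filter.Eventually.of_forall fun y => (hsq y).symm)
  · rw [integral_congr_ae (Filter.Eventually.of_forall hsq),
      integral_finset_sum _ (fun x _ => integrable_finset_sum _
        (fun z _ => (hterm_int x z).const_mul _))]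
    have : ∀ x : ZMod n, ∫ y : ZMod n → ℝ, (∑ z : ZMod n,
        (c x * c z) * ∏ i : ZMod n, (y i - ρ) ^ (dmul x z i)) ∂(Measure.pi fun _ : ZMod n => ν)
        = c x ^ 2 * τ ^ 4 := by
      intro x
      rw [integral_finset_sum _ (fun z _ => (hterm_int x z).const_mul _)]
      have : ∀ z : ZMod n, ∫ y : ZMod n → ℝ,
          (c x * c z) * ∏ i : ZMod n, (y i - ρ) ^ (dmul x z i) ∂(Measure.pi fun _ : ZMod n => ν)
          = if x = z then c x ^ 2 * τ ^ 4 else 0 := by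
        intro z
        rw [MeasureTheory.integral_const_mul, hval x z]
        by_cases h : x = z
        · subst h
          rw [if_pos rfl, if_pos rfl]
          ring
        · simp [h]
      rw [Finset.sum_congr rfl fun z _ => this z, Finset.sum_ite_eq univ x
        (fun _ => c x ^ 2 * τ ^ 4)]
      simp
    rw [Finset.sum_congr rfl fun x _ => this x, Finset.mul_sum]
    exact Finset.sum_congr rfl fun x _ => by ring


/-- `L²` bound on the time-integrated quadratic fluctuation term for a
stationary process with product marginals. If for each `s ∈ [0,T]` the law of `X_s`
is the `n`-fold product of a fixed probability measure `ν` on `ℝ` with mean `ρ` and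
variance `τ²`, and `g` is measurable with `∫_0^T Σ_x g(s,x)² ds < ∞`, then for every
`t ∈ [0,T]`,
`E[(∫_0^t Σ_x g(s,x) X̄_s(x) X̄_s(x+1) ds)²] ≤ t τ⁴ ∫_0^t Σ_x g(s,x)² ds`. -/
theorem time_integrated_quadratic_bound
    {Ω : Type*} [MeasurableSpace Ω] (P : Measure Ω) [IsProbabilityMeasure P]
    (n : ℕ) [NeZero n] (hn : 3 ≤ n)
    (T ρ τ : ℝ) (hT : 0 < T) (hτ : 0 ≤ τ)
    (X : ℝ → Ω → ZMod n → ℝ) (hX : Measurable fun p : ℝ × Ω => X p.1 p.2)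
    (ν : Measure ℝ) [IsProbabilityMeasure ν]
    (hL2 : MemLp (fun u : ℝ => u) 2 ν)
    (hmean : ∫ u : ℝ, u ∂ν = ρ)
    (hvar : ∫ u : ℝ, (u - ρ) ^ 2 ∂ν = τ ^ 2)
    (hlaw : ∀ s ∈ Set.Icc (0 : ℝ) T,
      Measure.map (X s) P = Measure.pi fun _ : ZMod n => ν)
    (g : ℝ → ZMod n → ℝ) (hg : ∀ x, Measurable fun s => g s x)
    (hgInt : ∫⁻ s in Set.Icc (0 : ℝ) T,
        ENNReal.ofReal (∑ x : ZMod n, (g s x) ^ 2) < ⊤) :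
    ∀ t ∈ Set.Icc (0 : ℝ) T,
      ∫ ω, (∫ s in Set.Icc (0 : ℝ) t,
            ∑ x : ZMod n, g s x * ((X s ω x - ρ) * (X s ω (x + 1) - ρ))) ^ 2 ∂P
        ≤ t * τ ^ 4 * ∫ s in Set.Icc (0 : ℝ) t, ∑ x : ZMod n, (g s x) ^ 2 := by
  intro t ht
  obtain ⟨ht0, htT⟩ := ht
  have hsub : Set.Icc (0 : ℝ) t ⊆ Set.Icc (0 : ℝ) T := Set.Icc_subset_Icc le_rfl htT
  set μt : Measure ℝ := volume.restrict (Set.Icc (0 : ℝ) t) with hμt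
  set F : ℝ → Ω → ℝ :=
    fun s ω => ∑ x : ZMod n, g s x * ((X s ω x - ρ) * (X s ω (x + 1) - ρ)) with hFdef
  have hFm : Measurable fun p : ℝ × Ω => F p.1 p.2 := by
    simp only [hFdef]
    exact Finset.measurable_sum _ fun x _ =>
      ((hg x).comp measurable_fst).mul
        ((((measurable_pi_apply x).comp hX).sub measurable_const).mul
          (((measurable_pi_apply (x + 1)).comp hX).sub measurable_const))
  have hXs : ∀ s : ℝ, Measurable (X s) :=
    fun s => hX.comp (measurable_const.prodMk measurable_id)
  have hGm : ∀ s : ℝ, Measurable (fun y : ZMod n → ℝ =>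
      (∑ x : ZMod n, g s x * ((y x - ρ) * (y (x + 1) - ρ))) ^ 2) := by
    intro s
    apply Measurable.pow_const
    exact Finset.measurable_sum _ fun x _ =>
      measurable_const.mul (((measurable_pi_apply x).sub measurable_const).mul
        ((measurable_pi_apply (x + 1)).sub measurable_const))
  have hsumm : Measurable fun s : ℝ => ∑ x : ZMod n, (g s x) ^ 2 :=
    Finset.measurable_sum _ fun x _ => (hg x).pow_const 2
  have h3 : ∀ s ∈ Set.Icc (0 : ℝ) T,
      ∫⁻ ω, ENNReal.ofReal ((F s ω) ^ 2) ∂P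
        = ENNReal.ofReal (τ ^ 4 * ∑ x : ZMod n, (g s x) ^ 2) := by
    intro s hs
    obtain ⟨hMint, hMval⟩ := aux_moment hn ρ τ ν hL2 hmean hvar (g s)
    have hmap := lintegral_map (μ := P) (g := X s)
      (f := fun y : ZMod n → ℝ =>
        ENNReal.ofReal ((∑ x : ZMod n, g s x * ((y x - ρ) * (y (x + 1) - ρ))) ^ 2))
      (ENNReal.measurable_ofReal.comp (hGm s)) (hXs s)
    rw [hlaw s hs] at hmap
    calc ∫⁻ ω, ENNReal.ofReal ((F s ω) ^ 2) ∂P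
        = ∫⁻ y, ENNReal.ofReal ((∑ x : ZMod n, g s x * ((y x - ρ) * (y (x + 1) - ρ))) ^ 2)
            ∂(Measure.pi fun _ : ZMod n => ν) := by
          rw [← hmap]
      _ = ENNReal.ofReal (∫ y, (∑ x : ZMod n, g s x * ((y x - ρ) * (y (x + 1) - ρ))) ^ 2
            ∂(Measure.pi fun _ : ZMod n => ν)) :=
          (ofReal_integral_eq_lintegral_ofReal hMint
            (Filter.Eventually.of_forall fun y => sq_nonneg _)).symm
      _ = ENNReal.ofReal (τ ^ 4 * ∑ x : ZMod n, (g s x) ^ 2) := by rw [hMval]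
  have hswap : ∫⁻ ω, (∫⁻ s, ENNReal.ofReal ((F s ω) ^ 2) ∂μt) ∂P
      = ∫⁻ s, (∫⁻ ω, ENNReal.ofReal ((F s ω) ^ 2) ∂P) ∂μt := by
    apply lintegral_lintegral_swap
    exact (ENNReal.measurable_ofReal.comp
      (((hFm.comp measurable_swap).pow_const 2))).aemeasurable
  have hbound : ∫⁻ s, (∫⁻ ω, ENNReal.ofReal ((F s ω) ^ 2) ∂P) ∂μt
      = ∫⁻ s, ENNReal.ofReal (τ ^ 4 * ∑ x : ZMod n, (g s x) ^ 2) ∂μt := by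
    rw [hμt]
    apply lintegral_congr_ae
    filter_upwards [ae_restrict_mem measurableSet_Icc] with s hs
    exact h3 s (hsub hs)
  have hsplit : ∫⁻ s, ENNReal.ofReal (τ ^ 4 * ∑ x : ZMod n, (g s x) ^ 2) ∂μt
      = ENNReal.ofReal (τ ^ 4) * ∫⁻ s, ENNReal.ofReal (∑ x : ZMod n, (g s x) ^ 2) ∂μt := by
    rw [← lintegral_const_mul _ hsumm.ennreal_ofReal]
    exact lintegral_congr fun s => by rw [ENNReal.ofReal_mul (by positivity)]
  have hfin : ∫⁻ s, ENNReal.ofReal (τ ^ 4 * ∑ x : ZMod n, (g s x) ^ 2) ∂μt < ⊤ := by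
    rw [hsplit]
    refine ENNReal.mul_lt_top ENNReal.ofReal_lt_top (lt_of_le_of_lt ?_ hgInt)
    exact lintegral_mono' (Measure.restrict_mono hsub le_rfl) le_rfl
  have hCS : ∀ ω, ENNReal.ofReal ((∫ s, F s ω ∂μt) ^ 2)
      ≤ ENNReal.ofReal t * ∫⁻ s, ENNReal.ofReal ((F s ω) ^ 2) ∂μt := by
    intro ω
    have h := aux_CS μt (fun s => F s ω)
    rwa [hμt, Measure.restrict_apply_univ, Real.volume_Icc, sub_zero] at h
  have hImeas : StronglyMeasurable (fun ω => ∫ s, F s ω ∂μt) := by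
    have h : StronglyMeasurable (fun p : Ω × ℝ => F p.2 p.1) :=
      (hFm.comp measurable_swap).stronglyMeasurable
    exact h.integral_prod_right'
  have hlint_le : ∫⁻ ω, ENNReal.ofReal ((∫ s, F s ω ∂μt) ^ 2) ∂P
      ≤ ENNReal.ofReal t * ∫⁻ s, ENNReal.ofReal (τ ^ 4 * ∑ x : ZMod n, (g s x) ^ 2) ∂μt := by
    calc ∫⁻ ω, ENNReal.ofReal ((∫ s, F s ω ∂μt) ^ 2) ∂P
        ≤ ∫⁻ ω, ENNReal.ofReal t * ∫⁻ s, ENNReal.ofReal ((F s ω) ^ 2) ∂μt ∂P :=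
          lintegral_mono hCS
      _ = ENNReal.ofReal t * ∫⁻ ω, (∫⁻ s, ENNReal.ofReal ((F s ω) ^ 2) ∂μt) ∂P := by
          apply lintegral_const_mul
          exact Measurable.lintegral_prod_right'
            (f := fun p : Ω × ℝ => ENNReal.ofReal ((F p.2 p.1) ^ 2))
            (ENNReal.measurable_ofReal.comp ((hFm.comp measurable_swap).pow_const 2))
      _ = _ := by rw [hswap, hbound]
  have hfin2 : ∫⁻ ω, ENNReal.ofReal ((∫ s, F s ω ∂μt) ^ 2) ∂P ≠ ⊤ :=
    (lt_of_le_of_lt hlint_le (ENNReal.mul_lt_top ENNReal.ofReal_lt_top hfin)).ne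
  have hIeq : ∫ ω, (∫ s, F s ω ∂μt) ^ 2 ∂P
      = (∫⁻ ω, ENNReal.ofReal ((∫ s, F s ω ∂μt) ^ 2) ∂P).toReal :=
    integral_eq_lintegral_of_nonneg_ae (Filter.Eventually.of_forall fun ω => sq_nonneg _)
      (hImeas.measurable.pow_const 2).aestronglyMeasurable
  have hRHS : ∫ s, (∑ x : ZMod n, (g s x) ^ 2) ∂μt
      = (∫⁻ s, ENNReal.ofReal (∑ x : ZMod n, (g s x) ^ 2) ∂μt).toReal :=
    integral_eq_lintegral_of_nonneg_ae
      (Filter.Eventually.of_forall fun s => by positivity) hsumm.aestronglyMeasurable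
  calc ∫ ω, (∫ s, F s ω ∂μt) ^ 2 ∂P
      = (∫⁻ ω, ENNReal.ofReal ((∫ s, F s ω ∂μt) ^ 2) ∂P).toReal := hIeq
    _ ≤ (ENNReal.ofReal t *
          ∫⁻ s, ENNReal.ofReal (τ ^ 4 * ∑ x : ZMod n, (g s x) ^ 2) ∂μt).toReal :=
        ENNReal.toReal_mono (ENNReal.mul_lt_top ENNReal.ofReal_lt_top hfin).ne hlint_le
    _ = t * (τ ^ 4 * (∫⁻ s, ENNReal.ofReal (∑ x : ZMod n, (g s x) ^ 2) ∂μt).toReal) := by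
        rw [hsplit, ENNReal.toReal_mul, ENNReal.toReal_mul, ENNReal.toReal_ofReal ht0,
          ENNReal.toReal_ofReal (by positivity)]
    _ = t * τ ^ 4 * ∫ s, (∑ x : ZMod n, (g s x) ^ 2) ∂μt := by rw [hRHS]; ring


end
end
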